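/- As an identity of formal power series in two variables over $\mathbb{Q}$: $\sum_{m,n \ge 0} \left( \sum_{j \ge 0} (j!)^2 S(m,j) S(n,j) \right) \frac{x^m y^n}{m! n!} = \frac{1}{e^x + e^y - e^{x+y}}$. -/

import Mathlib

/-- Stirling numbers of the second kind. -/
def stirling : ℕ → ℕ → ℕ
  | 0, 0 => 1
  | 0, _ + 1 => 0
  | _ + 1, 0 => 0
  | n + 1, j + 1 => (j + 1) * stirling n (j + 1) + stirling n j

/-- The EGF `Ψ_{2+2}(x,y) = ∑_{m,n} (∑_j (j!)² S(m,j) S(n,j)) xᵐyⁿ/(m!n!)`. -/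
def PsiTwoTwo : MvPowerSeries (Fin 2) ℚ :=
  fun d => (∑ j ∈ Finset.range (min (d 0) (d 1) + 1),
      ((j.factorial : ℚ)) ^ 2 * stirling (d 0) j * stirling (d 1) j) /
    ((d 0).factorial * (d 1).factorial)

/-- The two-variable power series `e^x + e^y - e^{x+y}`, written coefficientwise:
its coefficient of `xᵐyⁿ` is `1/m!` if `n = 0`, plus `1/n!` if `m = 0`, minus `1/(m!n!)`. -/
def expCombo : MvPowerSeries (Fin 2) ℚ :=
  fun d => (if d 1 = 0 then (1 : ℚ) / (d 0).factorial else 0) +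
    (if d 0 = 0 then (1 : ℚ) / (d 1).factorial else 0) -
    1 / ((d 0).factorial * (d 1).factorial)

open Finset

lemma stirling_eq_zero : ∀ {m j : ℕ}, m < j → stirling m j = 0 := by
  intro m
  induction m with
  | zero => intro j h
            match j, h with
            | j+1, _ => rfl
  | succ m ih =>
    intro j h
    match j, h with
    | j+1, h =>
      show (j+1) * stirling m (j+1) + stirling m j = 0
      rw [ih (by omega), ih (by omega)]
      simp

lemma sum_choose_stirling : ∀ (m j : ℕ),
    ∑ k ∈ range (m+1), m.choose k * stirling k j = stirling (m+1) (j+1) := by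
  intro m
  induction m with
  | zero => intro j; cases j <;> simp [stirling]
  | succ m ih =>
    intro j
    rw [Finset.sum_range_succ']
    simp_rw [Nat.choose_succ_succ, add_mul]
    rw [Finset.sum_add_distrib]
    have h2 : (∑ k ∈ range (m+1), m.choose (k+1) * stirling (k+1) j)
        + (m+1).choose 0 * stirling 0 j = stirling (m+1) (j+1) := by
      have : (∑ k ∈ range (m+1), m.choose (k+1) * stirling (k+1) j)
          + (m+1).choose 0 * stirling 0 j
          = ∑ k ∈ range (m+2), m.choose k * stirling k j := by
        rw [Finset.sum_range_succ' (fun k => m.choose k * stirling k j) (m+1)]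
        simp
      rw [this, Finset.sum_range_succ, Nat.choose_succ_self, zero_mul, add_zero, ih]
    rw [add_assoc, h2]
    cases j with
    | zero =>
      have hz : ∀ k, stirling (k+1) 0 = 0 := fun k => rfl
      simp only [hz, mul_zero, Finset.sum_const_zero, zero_add]
      show stirling (m+1) 1 = stirling (m+2) 1
      show stirling (m+1) 1 = 1 * stirling (m+1) 1 + stirling (m+1) 0
      have : stirling (m+1) 0 = 0 := rfl
      omega
    | succ j =>
      have hs : ∀ k, stirling (k+1) (j+1) = (j+1) * stirling k (j+1) + stirling k j :=
        fun k => rfl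
      have hsum : ∑ x ∈ range (m+1), m.choose x * stirling (x+1) (j+1)
          = (j+1) * (∑ x ∈ range (m+1), m.choose x * stirling x (j+1))
            + ∑ x ∈ range (m+1), m.choose x * stirling x j := by
        rw [Finset.mul_sum, ← Finset.sum_add_distrib]
        exact Finset.sum_congr rfl fun x _ => by rw [hs]; ring
      rw [hsum, ih, ih]
      show _ = stirling (m+2) (j+2)
      show _ = (j+2) * stirling (m+1) (j+2) + stirling (m+1) (j+1)
      ring

noncomputable def sigN (m n N : ℕ) : ℚ :=
  ∑ j ∈ range N, (j.factorial : ℚ) ^ 2 * stirling m j * stirling n j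

lemma sig_extend (m n N : ℕ) (h : min m n + 1 ≤ N) :
    sigN m n (min m n + 1) = sigN m n N := by
  apply Finset.sum_subset (Finset.range_subset_range.2 h)
  intro j _ hj
  rw [Finset.mem_range, not_lt] at hj
  rcases le_total m n with hmn | hmn
  · rw [stirling_eq_zero (show m < j by omega)]; ring
  · rw [stirling_eq_zero (show n < j by omega)]; ring

lemma swap_gen (m N : ℕ) (g : ℕ → ℚ) :
    ∑ i ∈ range (m+1), (m.choose i : ℚ) *
      (∑ j ∈ range N, (j.factorial : ℚ) ^ 2 * stirling i j * g j)
    = ∑ j ∈ range N, (j.factorial : ℚ) ^ 2 * stirling (m+1) (j+1) * g j := by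
  simp_rw [Finset.mul_sum]
  rw [Finset.sum_comm]
  refine Finset.sum_congr rfl fun j _ => ?_
  have : ∑ i ∈ range (m+1), (m.choose i : ℚ) * ((j.factorial : ℚ) ^ 2 * stirling i j * g j)
      = ((j.factorial : ℚ) ^ 2 * g j) * ((∑ i ∈ range (m+1), m.choose i * stirling i j : ℕ) : ℚ) := by
    push_cast
    rw [Finset.mul_sum]
    exact Finset.sum_congr rfl fun i _ => by ring
  rw [this, sum_choose_stirling]
  ring

lemma core (m n N : ℕ) (hm : min m n < N) :
    (∑ j ∈ range N, (j.factorial : ℚ) ^ 2 * stirling (m+1) (j+1) * stirling n j)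
    + (∑ j ∈ range N, (j.factorial : ℚ) ^ 2 * stirling m j * stirling (n+1) (j+1))
    - (∑ j ∈ range N, (j.factorial : ℚ) ^ 2 * stirling (m+1) (j+1) * stirling (n+1) (j+1))
    = if m = 0 ∧ n = 0 then 1 else 0 := by
  set f : ℕ → ℚ := fun j => (j.factorial : ℚ) ^ 2 * stirling m j * stirling n j with hf
  have step : ∀ j, (j.factorial : ℚ) ^ 2 * stirling (m+1) (j+1) * stirling n j
      + (j.factorial : ℚ) ^ 2 * stirling m j * stirling (n+1) (j+1)
      - (j.factorial : ℚ) ^ 2 * stirling (m+1) (j+1) * stirling (n+1) (j+1)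
      = f j - f (j+1) := by
    intro j
    have e1 : stirling (m+1) (j+1) = (j+1) * stirling m (j+1) + stirling m j := rfl
    have e2 : stirling (n+1) (j+1) = (j+1) * stirling n (j+1) + stirling n j := rfl
    simp only [hf, e1, e2, Nat.factorial_succ]
    push_cast
    ring
  rw [← Finset.sum_add_distrib, ← Finset.sum_sub_distrib]
  have : ∑ j ∈ range N, ((j.factorial : ℚ) ^ 2 * stirling (m+1) (j+1) * stirling n j
      + (j.factorial : ℚ) ^ 2 * stirling m j * stirling (n+1) (j+1)
      - (j.factorial : ℚ) ^ 2 * stirling (m+1) (j+1) * stirling (n+1) (j+1))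
      = ∑ j ∈ range N, (f j - f (j+1)) :=
    Finset.sum_congr rfl fun j _ => step j
  rw [this, Finset.sum_range_sub' f N]
  have hfN : f N = 0 := by
    rcases le_total m n with h | h
    · simp only [hf, stirling_eq_zero (show m < N by omega)]; ring
    · simp only [hf, stirling_eq_zero (show n < N by omega)]; ring
  rw [hfN, sub_zero]
  rcases Nat.eq_zero_or_pos m with hm0 | hm0
  · rcases Nat.eq_zero_or_pos n with hn0 | hn0
    · subst hm0; subst hn0; simp [hf, stirling]
    · have h0 : stirling n 0 = 0 := by cases n with | zero => omega | succ k => rfl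
      rw [if_neg (by omega)]
      simp [hf, h0]
  · have h0 : stirling m 0 = 0 := by cases m with | zero => omega | succ k => rfl
    rw [if_neg (by omega)]
    simp [hf, h0]

lemma sigN_comm (m n N : ℕ) : sigN m n N = sigN n m N :=
  Finset.sum_congr rfl fun j _ => by ring

lemma main_sum (m n : ℕ) :
    ∑ i ∈ range (m+1), ∑ j ∈ range (n+1),
      (m.choose i : ℚ) * (n.choose j) * sigN i j (min m n + 2) *
        ((if j = n then 1 else 0) + (if i = m then 1 else 0) - 1)
    = if m = 0 ∧ n = 0 then 1 else 0 := by
  set N := min m n + 2 with hN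
  have split : ∀ i ∈ range (m+1), ∀ j ∈ range (n+1),
      (m.choose i : ℚ) * (n.choose j) * sigN i j N *
        ((if j = n then 1 else 0) + (if i = m then 1 else 0) - 1)
      = (if j = n then (m.choose i : ℚ) * (n.choose j) * sigN i j N else 0)
        + (if i = m then (m.choose i : ℚ) * (n.choose j) * sigN i j N else 0)
        - (m.choose i : ℚ) * (n.choose j) * sigN i j N := by
    intro i _ j _
    split_ifs <;> ring
  rw [Finset.sum_congr rfl fun i hi => Finset.sum_congr rfl fun j hj => split i hi j hj]
  simp_rw [Finset.sum_sub_distrib, Finset.sum_add_distrib]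
  have Sa : ∑ i ∈ range (m+1), ∑ j ∈ range (n+1),
      (if j = n then (m.choose i : ℚ) * (n.choose j) * sigN i j N else 0)
      = ∑ j ∈ range N, (j.factorial : ℚ) ^ 2 * stirling (m+1) (j+1) * stirling n j := by
    have inner : ∀ i, ∑ j ∈ range (n+1),
        (if j = n then (m.choose i : ℚ) * (n.choose j) * sigN i j N else 0)
        = (m.choose i : ℚ) * sigN i n N := by
      intro i
      rw [Finset.sum_ite_eq' (range (n+1)) n
        (fun j => (m.choose i : ℚ) * (n.choose j) * sigN i j N)]
      simp
    rw [Finset.sum_congr rfl fun i _ => inner i]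
    exact swap_gen m N (fun j => (stirling n j : ℚ))
  have Sb : ∑ i ∈ range (m+1), ∑ j ∈ range (n+1),
      (if i = m then (m.choose i : ℚ) * (n.choose j) * sigN i j N else 0)
      = ∑ j ∈ range N, (j.factorial : ℚ) ^ 2 * stirling m j * stirling (n+1) (j+1) := by
    rw [Finset.sum_comm]
    have inner : ∀ j, ∑ i ∈ range (m+1),
        (if i = m then (m.choose i : ℚ) * (n.choose j) * sigN i j N else 0)
        = (n.choose j : ℚ) * sigN j m N := by
      intro j
      rw [Finset.sum_ite_eq' (range (m+1)) m
        (fun i => (m.choose i : ℚ) * (n.choose j) * sigN i j N)]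
      simp [sigN_comm]
    rw [Finset.sum_congr rfl fun j _ => inner j]
    have hsw : ∑ j ∈ range (n+1), (n.choose j : ℚ) * sigN j m N
        = ∑ k ∈ range N, (k.factorial : ℚ) ^ 2 * stirling (n+1) (k+1) * stirling m k :=
      swap_gen n N (fun k => (stirling m k : ℚ))
    rw [hsw]
    exact Finset.sum_congr rfl fun j _ => by ring
  have Sc : ∑ i ∈ range (m+1), ∑ j ∈ range (n+1),
      (m.choose i : ℚ) * (n.choose j) * sigN i j N
      = ∑ j ∈ range N, (j.factorial : ℚ) ^ 2 * stirling (m+1) (j+1) * stirling (n+1) (j+1) := by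
    have inner : ∀ i, ∑ j ∈ range (n+1), (m.choose i : ℚ) * (n.choose j) * sigN i j N
        = (m.choose i : ℚ) * ∑ k ∈ range N,
            (k.factorial : ℚ) ^ 2 * stirling i k * stirling (n+1) (k+1) := by
      intro i
      have : ∑ j ∈ range (n+1), (m.choose i : ℚ) * (n.choose j) * sigN i j N
          = (m.choose i : ℚ) * ∑ j ∈ range (n+1), (n.choose j : ℚ) * sigN j i N := by
        rw [Finset.mul_sum]
        exact Finset.sum_congr rfl fun j _ => by rw [sigN_comm i j]; ring
      rw [this]
      have hsw : ∑ j ∈ range (n+1), (n.choose j : ℚ) * sigN j i N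
          = ∑ k ∈ range N, (k.factorial : ℚ) ^ 2 * stirling (n+1) (k+1) * stirling i k :=
        swap_gen n N (fun k => (stirling i k : ℚ))
      rw [hsw]
      congr 1
      exact Finset.sum_congr rfl fun k _ => by ring
    rw [Finset.sum_congr rfl fun i _ => inner i]
    exact swap_gen m N (fun k => (stirling (n+1) (k+1) : ℚ))
  rw [Sa, Sb, Sc]
  exact core m n N (by omega)
noncomputable def e (i j : ℕ) : Fin 2 →₀ ℕ := Finsupp.single 0 i + Finsupp.single 1 j
lemma e_apply0 (i j : ℕ) : e i j 0 = i := by simp [e, Finsupp.single_apply]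
lemma e_apply1 (i j : ℕ) : e i j 1 = j := by simp [e, Finsupp.single_apply]
lemma fin2cases (k : Fin 2) : k = 0 ∨ k = 1 := by omega
lemma e_eq (d : Fin 2 →₀ ℕ) : d = e (d 0) (d 1) := by
  ext k
  rcases fin2cases k with rfl | rfl
  · rw [e_apply0]
  · rw [e_apply1]
lemma e_zero_iff (i j : ℕ) : e i j = 0 ↔ i = 0 ∧ j = 0 := by
  constructor
  · intro h
    exact ⟨by rw [← e_apply0 i j, h]; rfl, by rw [← e_apply1 i j, h]; rfl⟩
  · rintro ⟨rfl, rfl⟩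
    ext k
    rcases fin2cases k with rfl | rfl
    · rw [e_apply0]; rfl
    · rw [e_apply1]; rfl
lemma e_add (i j p q : ℕ) : e i j + e p q = e (i + p) (j + q) := by
  ext k
  rcases fin2cases k with rfl | rfl
  · rw [Finsupp.add_apply, e_apply0, e_apply0, e_apply0]
  · rw [Finsupp.add_apply, e_apply1, e_apply1, e_apply1]


/-- `Ψ_{2+2}(x,y) = 1/(e^x + e^y - e^{x+y})`: the LHS is the multiplicative inverse of
`e^x + e^y - e^{x+y}` as a formal power series in two variables over `ℚ`. -/
theorem psiTwoTwo_egf : PsiTwoTwo * expCombo = 1 := by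
  ext d
  rw [MvPowerSeries.coeff_mul, MvPowerSeries.coeff_one]
  set m := d 0 with hm
  set n := d 1 with hn
  have hbij : ∑ p ∈ Finset.HasAntidiagonal.antidiagonal d,
        MvPowerSeries.coeff p.1 PsiTwoTwo * MvPowerSeries.coeff p.2 expCombo
      = ∑ q ∈ range (m+1) ×ˢ range (n+1),
          PsiTwoTwo (e q.1 q.2) * expCombo (e (m - q.1) (n - q.2)) := by
    refine Finset.sum_nbij' (fun p => (p.1 0, p.1 1))
      (fun q => (e q.1 q.2, e (m - q.1) (n - q.2))) ?_ ?_ ?_ ?_ ?_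
    · intro p hp
      rw [Finset.HasAntidiagonal.mem_antidiagonal] at hp
      have h0 : p.1 0 + p.2 0 = m := by rw [hm, ← hp]; rfl
      have h1 : p.1 1 + p.2 1 = n := by rw [hn, ← hp]; rfl
      simp only [Finset.mem_product, Finset.mem_range]
      omega
    · intro q hq
      simp only [Finset.mem_product, Finset.mem_range] at hq
      rw [Finset.HasAntidiagonal.mem_antidiagonal, e_add,
        show q.1 + (m - q.1) = m by omega, show q.2 + (n - q.2) = n by omega]
      exact (e_eq d).symm
    · intro p hp
      rw [Finset.HasAntidiagonal.mem_antidiagonal] at hp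
      have h0 : p.1 0 + p.2 0 = m := by rw [hm, ← hp]; rfl
      have h1 : p.1 1 + p.2 1 = n := by rw [hn, ← hp]; rfl
      have hfst : e (p.1 0) (p.1 1) = p.1 := (e_eq p.1).symm
      have hsnd : e (m - p.1 0) (n - p.1 1) = p.2 := by
        ext k
        rcases fin2cases k with rfl | rfl
        · rw [e_apply0]; omega
        · rw [e_apply1]; omega
      exact Prod.ext hfst hsnd
    · intro q hq
      exact Prod.ext (e_apply0 _ _) (e_apply1 _ _)
    · intro p hp
      rw [Finset.HasAntidiagonal.mem_antidiagonal] at hp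
      have h0 : p.1 0 + p.2 0 = m := by rw [hm, ← hp]; rfl
      have h1 : p.1 1 + p.2 1 = n := by rw [hn, ← hp]; rfl
      have hfst : e (p.1 0) (p.1 1) = p.1 := (e_eq p.1).symm
      have hsnd : e (m - p.1 0) (n - p.1 1) = p.2 := by
        ext k
        rcases fin2cases k with rfl | rfl
        · rw [e_apply0]; omega
        · rw [e_apply1]; omega
      show PsiTwoTwo p.1 * expCombo p.2
          = PsiTwoTwo (e (p.1 0) (p.1 1)) * expCombo (e (m - p.1 0) (n - p.1 1))
      rw [hfst, hsnd]
  rw [hbij, Finset.sum_product]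
  have hterm : ∀ i ∈ range (m+1), ∀ j ∈ range (n+1),
      PsiTwoTwo (e i j) * expCombo (e (m - i) (n - j))
      = (m.choose i : ℚ) * (n.choose j) * sigN i j (min m n + 2) *
          ((if j = n then 1 else 0) + (if i = m then 1 else 0) - 1)
        / ((m.factorial : ℚ) * n.factorial) := by
    intro i hi j hj
    rw [Finset.mem_range] at hi hj
    have hA : PsiTwoTwo (e i j) = sigN i j (min m n + 2)
        / ((i.factorial : ℚ) * j.factorial) := by
      have h1 : PsiTwoTwo (e i j) = sigN i j (min i j + 1)
          / ((i.factorial : ℚ) * j.factorial) := by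
        simp only [PsiTwoTwo, e_apply0, e_apply1, sigN]
      rw [h1, sig_extend i j (min m n + 2) (by omega)]
    have hB : expCombo (e (m - i) (n - j))
        = ((if j = n then (1:ℚ) else 0) + (if i = m then 1 else 0) - 1)
          / (((m-i).factorial : ℚ) * (n-j).factorial) := by
      have h2 : expCombo (e (m - i) (n - j))
          = (if n - j = 0 then (1 : ℚ) / (m-i).factorial else 0) +
            (if m - i = 0 then (1 : ℚ) / (n-j).factorial else 0) -
            1 / (((m-i).factorial : ℚ) * (n-j).factorial) := by
        simp only [expCombo, e_apply0, e_apply1]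
      rw [h2, if_congr (show n - j = 0 ↔ j = n by omega) rfl rfl,
        if_congr (show m - i = 0 ↔ i = m by omega) rfl rfl]
      by_cases h3 : j = n <;> by_cases h4 : i = m <;>
        simp [h3, h4, show n - n = 0 from by omega, show m - m = 0 from by omega,
          Nat.factorial] <;> ring
    rw [hA, hB, div_mul_div_comm]
    have km : ((m.choose i : ℚ)) * i.factorial * (m-i).factorial = m.factorial := by
      exact_mod_cast Nat.choose_mul_factorial_mul_factorial (show i ≤ m by omega)
    have kn : ((n.choose j : ℚ)) * j.factorial * (n-j).factorial = n.factorial := by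
      exact_mod_cast Nat.choose_mul_factorial_mul_factorial (show j ≤ n by omega)
    have hd1 : ((i.factorial : ℚ) * j.factorial) * (((m-i).factorial : ℚ) * (n-j).factorial) ≠ 0 := by
      positivity
    have hd2 : ((m.factorial : ℚ) * n.factorial) ≠ 0 := by positivity
    rw [div_eq_div_iff hd1 hd2, ← km, ← kn]
    ring
  rw [Finset.sum_congr rfl fun i hi => Finset.sum_congr rfl fun j hj => hterm i hi j hj]
  simp_rw [← Finset.sum_div]
  rw [main_sum m n]
  have hd0 : (d = 0) ↔ (m = 0 ∧ n = 0) := by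
    rw [show d = e m n from e_eq d, e_zero_iff]
  by_cases h : m = 0 ∧ n = 0
  · rw [if_pos h, if_pos (hd0.2 h), h.1, h.2]
    norm_num [Nat.factorial]
  · rw [if_neg h, if_neg (fun hh => h (hd0.1 hh))]
    simp
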